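/- arXiv:1802.04123 — 2 statements merged into one kernel-verified Lean document; each statement's English description precedes it below -/
import Mathlib

section
/- For any artinian lattice L, the group K(L) is a free abelian group, and the sub-semigroup K⁺(L) is a free commutative monoid; a basis is given by the classes of the simple intervals (composition factors) of L provided by the Jordan–Hölder–Dedekind theorem. -/
/-- A preorder has *finite length* if there is a uniform bound on the length of strict
chains `a₀ < a₁ < … < aₘ`. -/
def BoundedChainLength (L : Type*) [Preorder L] : Prop :=
  ∃ n : ℕ, ∀ (m : ℕ) (f : Fin (m + 1) → L), StrictMono f → m ≤ n

/-- Generators of the K-group of a lattice: intervals `[a,b]` with `a ≤ b`. -/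
def IntervalGen (L : Type*) [Lattice L] : Type _ := {p : L × L // p.1 ≤ p.2}

/-- The relations defining the K-group: `[a,b] + [b,c] = [a,c]` and `[a, a⊔b] = [a⊓b, b]`. -/
def KRelSet (L : Type*) [Lattice L] : Set (FreeAbelianGroup (IntervalGen L)) :=
  {x | ∃ (a b c : L) (hab : a ≤ b) (hbc : b ≤ c),
      x = FreeAbelianGroup.of (⟨(a, b), hab⟩ : IntervalGen L)
        + FreeAbelianGroup.of (⟨(b, c), hbc⟩ : IntervalGen L)
        - FreeAbelianGroup.of (⟨(a, c), hab.trans hbc⟩ : IntervalGen L)} ∪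
  {x | ∃ a b : L,
      x = FreeAbelianGroup.of (⟨(a, a ⊔ b), le_sup_left⟩ : IntervalGen L)
        - FreeAbelianGroup.of (⟨(a ⊓ b, b), inf_le_right⟩ : IntervalGen L)}

/-- The K-group `K(L)` of a lattice: the abelian group generated by intervals `[a,b]`,
`a ≤ b`, modulo the relations `[a,b] + [b,c] = [a,c]` and `[a, a⊔b] = [a⊓b, b]`. -/
abbrev KGroup (L : Type*) [Lattice L] : Type _ :=
  FreeAbelianGroup (IntervalGen L) ⧸ AddSubgroup.closure (KRelSet L)

open Classical in
/-- The class of the interval `[a,b]` in `K(L)` (by convention `0` if `a ≤ b` fails). -/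
noncomputable def Kcls {L : Type*} [Lattice L] (a b : L) : KGroup L :=
  if h : a ≤ b then QuotientAddGroup.mk (FreeAbelianGroup.of (⟨(a, b), h⟩ : IntervalGen L))
  else 0


/-- The sub-semigroup (submonoid) `K⁺(L) ⊆ K(L)` generated by the classes `[a,b]`, `a < b`. -/
def KPos (L : Type*) [Lattice L] : AddSubmonoid (KGroup L) :=
  AddSubmonoid.closure {x | ∃ a b : L, a < b ∧ x = Kcls a b}

/-- An interval `[a,b]`, `a < b`, is simple if there is no element strictly between `a`
and `b`. -/
def SimpleInterval {L : Type*} [Lattice L] (a b : L) : Prop :=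
  a < b ∧ ∀ c : L, a < c → c < b → False

/-- The set of classes in `K(L)` of simple intervals of `L`. -/
def SimpleClasses (L : Type*) [Lattice L] : Set (KGroup L) :=
  {x | ∃ a b : L, SimpleInterval a b ∧ x = Kcls a b}

namespace KProof

variable {L : Type*} [Lattice L]

lemma Kcls_eq {a b : L} (h : a ≤ b) :
    Kcls a b = QuotientAddGroup.mk (FreeAbelianGroup.of (α := IntervalGen L) ⟨(a, b), h⟩) :=
  dif_pos h

lemma Kcls_add {a b c : L} (hab : a ≤ b) (hbc : b ≤ c) :
    Kcls a b + Kcls b c = Kcls a c := by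
  rw [Kcls_eq hab, Kcls_eq hbc, Kcls_eq (hab.trans hbc), ← QuotientAddGroup.mk_add]
  rw [QuotientAddGroup.eq_iff_sub_mem]
  exact AddSubgroup.subset_closure (Or.inl ⟨a, b, c, hab, hbc, rfl⟩)

lemma Kcls_refl (a : L) : Kcls a a = 0 := by
  have h := Kcls_add (le_refl a) (le_refl a)
  exact (add_eq_left).mp h

lemma Kcls_second (a b : L) : Kcls a (a ⊔ b) = Kcls (a ⊓ b) b := by
  rw [Kcls_eq (le_sup_left : a ≤ a ⊔ b), Kcls_eq (inf_le_right : a ⊓ b ≤ b)]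
  rw [QuotientAddGroup.eq_iff_sub_mem]
  exact AddSubgroup.subset_closure (Or.inr ⟨a, b, rfl⟩)

variable [IsModularLattice L]

lemma Kcls_sup {x y a : L} (h1 : x ≤ y) (h2 : a ⊓ y ≤ x) :
    Kcls x y = Kcls (x ⊔ a) (y ⊔ a) := by
  have e1 : (x ⊔ a) ⊔ y = y ⊔ a := by
    rw [sup_comm x a, sup_assoc, sup_eq_right.mpr h1, sup_comm]
  have e2 : (x ⊔ a) ⊓ y = x := by
    rw [sup_inf_assoc_of_le a h1, sup_eq_left.mpr (le_trans (by rw [inf_comm]) h2)]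
  have := Kcls_second (x ⊔ a) y
  rw [e1, e2] at this
  exact this.symm

noncomputable instance modularJHL : JordanHolderLattice L where
  IsMaximal a b := a ⋖ b
  lt_of_isMaximal h := h.lt
  sup_eq_of_isMaximal {x y z} hx hy hne := by
    rcases hx.eq_or_eq (le_sup_left : x ≤ x ⊔ y) (sup_le hx.lt.le hy.lt.le) with h | h
    · exact absurd (hy.eq_or_eq (le_sup_right.trans h.le) hx.lt.le)
        (by rintro (rfl | rfl); exacts [hne rfl, absurd rfl hx.lt.ne])
    · exact h
  isMaximal_inf_left_of_isMaximal_sup {x y} _ hy := inf_covBy_of_covBy_sup_right hy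

lemma isMaximal_def {a b : L} : JordanHolderLattice.IsMaximal a b ↔ a ⋖ b := Iff.rfl

end KProof

namespace KProof

open JordanHolderLattice RelSeries

variable {L : Type*} [Lattice L] [IsModularLattice L]

/-- The simple class attached to a covering pair. -/
noncomputable def scls {a b : L} (h : JordanHolderLattice.IsMaximal a b) : SimpleClasses L :=
  ⟨Kcls a b, a, b,
    ⟨(isMaximal_def.mp h).lt, fun _ h1 h2 => (isMaximal_def.mp h).2 h1 h2⟩, rfl⟩

lemma scls_val {a b : L} (h : JordanHolderLattice.IsMaximal a b) :
    (scls h : KGroup L) = Kcls a b := rfl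

lemma scls_congr {a b a' b' : L} {h : JordanHolderLattice.IsMaximal a b}
    {h' : JordanHolderLattice.IsMaximal a' b'} (ha : a = a') (hb : b = b') :
    scls h = scls h' := by subst ha; subst hb; rfl

/-- The multiset of composition factors (as simple classes) of a composition series. -/
noncomputable def sfactors (s : CompositionSeries L) : Multiset (SimpleClasses L) :=
  ∑ i : Fin s.length, ({scls (s.step i)} : Multiset (SimpleClasses L))

lemma sfactors_of_length_eq_zero {s : CompositionSeries L} (h : s.length = 0) :
    sfactors s = 0 := by
  have : IsEmpty (Fin s.length) := by rw [h]; infer_instance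
  simp [sfactors, Finset.univ_eq_empty]

lemma sfactors_snoc (s : CompositionSeries L) (x : L)
    (h : JordanHolderLattice.IsMaximal s.last x) :
    sfactors (s.snoc x h) = sfactors s + {scls h} := by
  show (∑ i : Fin (s.length + 1), _) = _
  rw [Fin.sum_univ_castSucc]
  congr 1
  · apply Finset.sum_congr rfl
    intro i _
    congr 1
    exact scls_congr (RelSeries.snoc_castSucc s x h i.castSucc)
      (by erw [Fin.succ_castSucc]; exact RelSeries.snoc_castSucc s x h i.succ)
  · congr 1
    exact scls_congr
      (by erw [show (Fin.last s.length).castSucc = (Fin.last s.length).castSucc from rfl]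
          exact (RelSeries.snoc_castSucc s x h (Fin.last s.length)).trans rfl)
      (by erw [Fin.succ_last]; exact RelSeries.last_snoc' s x h)

lemma sfactors_smash (p q : CompositionSeries L) (hpq : p.last = q.head) :
    sfactors (p.smash q hpq) = sfactors p + sfactors q := by
  show (∑ i : Fin (p.length + q.length), _) = _
  rw [Fin.sum_univ_add]
  congr 1
  · apply Finset.sum_congr rfl
    intro i _
    congr 1
    exact scls_congr (RelSeries.smash_castAdd hpq i) (RelSeries.smash_succ_castAdd hpq i)
  · apply Finset.sum_congr rfl
    intro i _
    congr 1
    exact scls_congr (RelSeries.smash_natAdd hpq i) (RelSeries.smash_succ_natAdd hpq i)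

lemma sfactors_equiv {s t : CompositionSeries L} (h : CompositionSeries.Equivalent s t) :
    sfactors s = sfactors t := by
  obtain ⟨e, he⟩ := h
  rw [sfactors, sfactors,
    ← Equiv.sum_comp e (fun i => ({scls (t.step i)} : Multiset (SimpleClasses L)))]
  apply Finset.sum_congr rfl
  intro i _
  congr 1
  exact Subtype.ext (Iso.rel (fun p q => Kcls p.1 p.2 = Kcls q.1 q.2) rfl Eq.symm Eq.trans
    (fun {x y} _ => Kcls_second x y) (he i))

lemma sfactors_eq_of_head_last {s t : CompositionSeries L}
    (hh : s.head = t.head) (hl : s.last = t.last) : sfactors s = sfactors t :=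
  sfactors_equiv (CompositionSeries.jordan_holder s t hh hl)

lemma head_eq_last_of_length_eq_zero {s : CompositionSeries L} (h : s.length = 0) :
    s.head = s.last := by
  have : (0 : Fin (s.length + 1)) = Fin.last s.length := by
    ext; simp [h]
  rw [RelSeries.head, RelSeries.last, this]

lemma sfactors_sum (s : CompositionSeries L) :
    ((sfactors s).map Subtype.val).sum = Kcls s.head s.last := by
  suffices H : ∀ (n : ℕ) (s : CompositionSeries L), s.length = n →
      ((sfactors s).map Subtype.val).sum = Kcls s.head s.last from H s.length s rfl
  intro n
  induction n with
  | zero =>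
    intro s hn
    rw [sfactors_of_length_eq_zero hn, head_eq_last_of_length_eq_zero hn]
    simp [Kcls_refl]
  | succ n ih =>
    intro s hn
    have h0 : 0 < s.length := by omega
    rw [CompositionSeries.eq_snoc_eraseLast h0, sfactors_snoc, Multiset.map_add,
      Multiset.sum_add, ih s.eraseLast (by simp [hn]),
      RelSeries.head_snoc, RelSeries.last_snoc, Multiset.map_singleton,
      Multiset.sum_singleton, scls_val]
    exact Kcls_add (CompositionSeries.le_last_of_mem s.eraseLast.head_mem)
      (lt_of_isMaximal (CompositionSeries.isMaximal_eraseLast_last h0)).le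

end KProof

namespace KProof

open JordanHolderLattice RelSeries

variable {L : Type*} [Lattice L] [IsModularLattice L]

lemma exists_sup_series :
    ∀ (n : ℕ) (s : CompositionSeries L), s.length = n → ∀ a : L, a ⊓ s.last ≤ s.head →
      ∃ t : CompositionSeries L,
        t.head = s.head ⊔ a ∧ t.last = s.last ⊔ a ∧ sfactors t = sfactors s := by
  intro n
  induction n with
  | zero =>
    intro s hn a _
    refine ⟨RelSeries.singleton _ (s.head ⊔ a), rfl, ?_, ?_⟩
    · rw [← head_eq_last_of_length_eq_zero hn]; rfl
    · rw [sfactors_of_length_eq_zero hn, sfactors_of_length_eq_zero rfl]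
  | succ n ih =>
    intro s hn a ha
    have h0 : 0 < s.length := by omega
    set s' := s.eraseLast with hs'
    have hm : JordanHolderLattice.IsMaximal s'.last s.last :=
      CompositionSeries.isMaximal_eraseLast_last h0
    have hax : a ⊓ s.last ≤ s'.last :=
      ha.trans (CompositionSeries.le_last_of_mem s'.head_mem)
    obtain ⟨t', ht'h, ht'l, ht'f⟩ := ih s' (by simp [hs', hn]) a
      (le_inf (inf_le_left.trans (le_refl a)) (inf_le_right.trans
        (CompositionSeries.last_eraseLast_le s)) |>.trans ha)
    have hcov : s'.last ⋖ s.last := isMaximal_def.mp hm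
    have hkey : s.last ⊓ (s'.last ⊔ a) = s'.last := by
      rw [inf_comm, sup_inf_assoc_of_le a (hcov.lt.le)]
      exact sup_eq_left.mpr hax
    have hstep : (s'.last ⊔ a) ⋖ (s.last ⊔ a) := by
      have := covBy_sup_of_inf_covBy_left (a := s.last) (b := s'.last ⊔ a)
        (by rw [hkey]; exact hcov)
      have he : s.last ⊔ (s'.last ⊔ a) = s.last ⊔ a := by
        rw [← sup_assoc, sup_eq_left.mpr hcov.lt.le]
      rwa [he] at this
    have hstep' : JordanHolderLattice.IsMaximal t'.last (s.last ⊔ a) := by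
      rw [ht'l]; exact isMaximal_def.mpr hstep
    refine ⟨t'.snoc (s.last ⊔ a) hstep', ?_, ?_, ?_⟩
    · rw [RelSeries.head_snoc, ht'h]; rfl
    · rw [RelSeries.last_snoc]
    · rw [sfactors_snoc, ht'f]
      conv_rhs => rw [CompositionSeries.eq_snoc_eraseLast h0]
      rw [sfactors_snoc]
      congr 1
      refine congrArg (fun z => ({z} : Multiset (SimpleClasses L))) (Subtype.ext ?_)
      rw [scls_val, scls_val, ht'l]
      exact (Kcls_sup hcov.lt.le hax).symm

lemma wfLT (hlen : BoundedChainLength L) :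
    WellFounded ((· < ·) : L → L → Prop) := by
  obtain ⟨n, hn⟩ := hlen
  rw [RelEmbedding.wellFounded_iff_isEmpty]
  by_contra h
  rw [not_isEmpty_iff] at h
  obtain ⟨f⟩ := h
  have hmono : StrictMono (fun i : Fin (n + 2) => f (n + 1 - (i : ℕ))) := by
    intro i j hij
    exact f.map_rel_iff.mpr (by
      have hi := i.2
      have hj := j.2
      have : (i : ℕ) < (j : ℕ) := hij
      omega)
  have := hn (n + 1) _ hmono
  omega

lemma exists_covby (hwf : WellFounded ((· < ·) : L → L → Prop)) {a b : L} (hab : a < b) :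
    ∃ c : L, a ⋖ c ∧ c ≤ b := by
  obtain ⟨c, ⟨hac, hcb⟩, hmin⟩ := hwf.has_min {c | a < c ∧ c ≤ b} ⟨b, hab, le_rfl⟩
  exact ⟨c, ⟨hac, fun d h1 h2 => hmin d ⟨h1, h2.le.trans hcb⟩ h2⟩, hcb⟩

lemma exists_series (hwf : WellFounded ((· < ·) : L → L → Prop)) :
    ∀ (k : ℕ) (a b : L), a ≤ b →
      (∀ (m : ℕ) (f : Fin (m + 1) → L), StrictMono f →
        (∀ i, a ≤ f i ∧ f i ≤ b) → m ≤ k) →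
      ∃ s : CompositionSeries L, s.head = a ∧ s.last = b := by
  intro k
  induction k with
  | zero =>
    intro a b hab hb
    rcases eq_or_lt_of_le hab with rfl | hlt
    · exact ⟨RelSeries.singleton _ a, rfl, rfl⟩
    · exfalso
      have hsm : StrictMono (fun i : Fin 2 => if (i : ℕ) = 0 then a else b) := by
        intro i j hij
        have hi : (i : ℕ) = 0 := by omega
        have hj : (j : ℕ) ≠ 0 := by
          have : (i : ℕ) < (j : ℕ) := hij
          omega
        simp [hi, hj, hlt]
      have := hb 1 _ hsm (fun i => by
        by_cases h : (i : ℕ) = 0 <;> simp [h, hab, le_refl])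
      omega
  | succ k ih =>
    intro a b hab hb
    rcases eq_or_lt_of_le hab with rfl | hlt
    · exact ⟨RelSeries.singleton _ a, rfl, rfl⟩
    · obtain ⟨c, hcov, hcb⟩ := exists_covby hwf hlt
      obtain ⟨s, hs1, hs2⟩ := ih c b hcb (fun m f hf hr => by
        have hsm : StrictMono (Fin.cases a f : Fin (m + 2) → L) := by
          rw [Fin.strictMono_iff_lt_succ]
          intro j
          refine Fin.cases ?_ ?_ j
          · show (Fin.cases a f : Fin (m + 2) → L) (Fin.castSucc 0) <
              (Fin.cases a f : Fin (m + 2) → L) (Fin.succ 0)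
            show a < f 0
            exact lt_of_lt_of_le hcov.lt (hr 0).1
          · intro i
            show (Fin.cases a f : Fin (m + 2) → L) (Fin.castSucc (Fin.succ i)) <
              (Fin.cases a f : Fin (m + 2) → L) (Fin.succ (Fin.succ i))
            rw [← Fin.succ_castSucc]
            show f (Fin.castSucc i) < f (Fin.succ i)
            exact hf (Fin.castSucc_lt_succ (i := i))
        have hrange : ∀ i : Fin (m + 2),
            a ≤ (Fin.cases a f : Fin (m + 2) → L) i ∧
              (Fin.cases a f : Fin (m + 2) → L) i ≤ b := by
          intro i
          refine Fin.cases ?_ ?_ i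
          · exact ⟨le_rfl, hlt.le⟩
          · intro i'
            exact ⟨hcov.lt.le.trans (hr i').1, (hr i').2⟩
        have := hb (m + 1) _ hsm hrange
        omega)
      refine ⟨s.cons a (by rw [hs1]; exact isMaximal_def.mpr hcov), ?_, ?_⟩
      · rw [RelSeries.head_cons]
      · rw [RelSeries.last_cons, hs2]

end KProof

namespace KProof

/-- Recover the subtype structure of an interval generator. -/
def igPair {L : Type*} [Lattice L] (p : IntervalGen L) : {q : L × L // q.1 ≤ q.2} := p

/-- Sum of `single s 1` over a multiset, as an additive monoid hom. -/
noncomputable def toZHom (σ : Type*) : Multiset σ →+ (σ →₀ ℤ) where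
  toFun m := (m.map fun s => Finsupp.single s (1 : ℤ)).sum
  map_zero' := rfl
  map_add' m n := by simp

lemma toZHom_single {σ : Type*} (x : σ) : toZHom σ {x} = Finsupp.single x 1 := by
  show ((({x} : Multiset σ).map fun s => Finsupp.single s (1 : ℤ)).sum) = _
  simp

end KProof

/-- for an artinian lattice `L` (nonempty modular lattice of finite length,
with `⊥` and `⊤`), the group `K(L)` is free abelian with basis given by the classes of
the simple intervals (composition factors) of `L`, and the sub-semigroup `K⁺(L)` is the
free commutative monoid on these classes: every element of `K⁺(L)` is uniquely a finite
`ℕ`-linear combination of classes of simple intervals. -/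
theorem kgroup_free_abelian_on_simple_classes
    (L : Type*) [Lattice L] [BoundedOrder L] [IsModularLattice L]
    (hlen : BoundedChainLength L) :
    LinearIndependent ℤ (fun s : SimpleClasses L => (s : KGroup L)) ∧
    Submodule.span ℤ (SimpleClasses L) = (⊤ : Submodule ℤ (KGroup L)) ∧
    (∀ x ∈ KPos L, ∃! c : SimpleClasses L →₀ ℕ,
      (c.sum fun s n => (n : ℤ) • (s : KGroup L)) = x) := by
  classical
  obtain ⟨n, hn⟩ := hlen
  have hwf := KProof.wfLT (L := L) ⟨n, hn⟩
  have hex : ∀ a b : L, a ≤ b → ∃ s : CompositionSeries L, s.head = a ∧ s.last = b :=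
    fun a b hab => KProof.exists_series hwf n a b hab (fun m f hf _ => hn m f hf)
  choose sc hh hl using hex
  -- uniqueness of factors
  have Funi : ∀ (a b : L) (h : a ≤ b) (t : CompositionSeries L),
      t.head = a → t.last = b → KProof.sfactors t = KProof.sfactors (sc a b h) := by
    intro a b h t ht1 ht2
    exact KProof.sfactors_eq_of_head_last (ht1.trans (hh a b h).symm)
      (ht2.trans (hl a b h).symm)
  have Fadd : ∀ (a b c : L) (hab : a ≤ b) (hbc : b ≤ c),
      KProof.sfactors (sc a c (hab.trans hbc))
        = KProof.sfactors (sc a b hab) + KProof.sfactors (sc b c hbc) := by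
    intro a b c hab hbc
    rw [← KProof.sfactors_smash (sc a b hab) (sc b c hbc) (by rw [hl, hh])]
    exact (Funi a c (hab.trans hbc) _
      (by rw [RelSeries.head_smash, hh]) (by rw [RelSeries.last_smash, hl])).symm
  have Fsecond : ∀ a b : L,
      KProof.sfactors (sc a (a ⊔ b) le_sup_left)
        = KProof.sfactors (sc (a ⊓ b) b inf_le_right) := by
    intro a b
    obtain ⟨t, th, tl, tf⟩ := KProof.exists_sup_series (sc (a ⊓ b) b inf_le_right).length
      (sc (a ⊓ b) b inf_le_right) rfl a (by rw [hl, hh])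
    have h1 : t.head = a := by
      rw [th, hh]; exact sup_eq_right.mpr inf_le_left
    have h2 : t.last = a ⊔ b := by
      rw [tl, hl, sup_comm]
    rw [← Funi a (a ⊔ b) le_sup_left t h1 h2, tf]
  -- the additive map to the free module
  set ψ : FreeAbelianGroup (IntervalGen L) →+ (SimpleClasses L →₀ ℤ) :=
    FreeAbelianGroup.lift (fun p : IntervalGen L =>
      KProof.toZHom _ (KProof.sfactors
        (sc (KProof.igPair p).1.1 (KProof.igPair p).1.2 (KProof.igPair p).2))) with hψ
  have hψof : ∀ (a b : L) (h : a ≤ b),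
      ψ (FreeAbelianGroup.of (⟨(a, b), h⟩ : IntervalGen L))
        = KProof.toZHom _ (KProof.sfactors (sc a b h)) := by
    intro a b h
    rw [hψ]
    exact FreeAbelianGroup.lift_apply_of _ _
  have hker : AddSubgroup.closure (KRelSet L) ≤ ψ.ker := by
    rw [AddSubgroup.closure_le]
    rintro x (⟨a, b, c, hab, hbc, rfl⟩ | ⟨a, b, rfl⟩) <;>
      refine (AddMonoidHom.mem_ker (f := ψ)).mpr ?_ <;> erw [map_sub]
    · erw [map_add]
      erw [hψof a b hab, hψof b c hbc, hψof a c (hab.trans hbc), Fadd a b c hab hbc,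
        map_add]
      abel
    · erw [hψof a (a ⊔ b) le_sup_left, hψof (a ⊓ b) b inf_le_right, Fsecond a b, sub_self]
  set Φ : KGroup L →+ (SimpleClasses L →₀ ℤ) :=
    QuotientAddGroup.lift (AddSubgroup.closure (KRelSet L)) ψ hker with hΦ
  have hΦK : ∀ (a b : L) (h : a ≤ b),
      Φ (Kcls a b) = KProof.toZHom _ (KProof.sfactors (sc a b h)) := by
    intro a b h
    rw [KProof.Kcls_eq h, hΦ]
    rw [QuotientAddGroup.lift_mk]
    exact hψof a b h
  -- factors of a simple interval
  have hsimplecls : ∀ (a b : L) (h : a ⋖ b),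
      KProof.sfactors (sc a b h.lt.le) = {KProof.scls (KProof.isMaximal_def.mpr h)} := by
    intro a b h
    have hrel : JordanHolderLattice.IsMaximal
        (RelSeries.singleton {(x, y) : L × L | JordanHolderLattice.IsMaximal x y} a).last b := by
      rw [RelSeries.last_singleton]; exact KProof.isMaximal_def.mpr h
    have e := Funi a b h.lt.le
      ((RelSeries.singleton {(x, y) : L × L | JordanHolderLattice.IsMaximal x y} a).snoc b hrel)
      (by rw [RelSeries.head_snoc, RelSeries.head_singleton])
      (by rw [RelSeries.last_snoc])
    rw [← e, KProof.sfactors_snoc, KProof.sfactors_of_length_eq_zero rfl, zero_add]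
    rfl
  have hΦs : ∀ s : SimpleClasses L, Φ (s : KGroup L) = Finsupp.single s 1 := by
    intro s
    obtain ⟨a, b, hsi, hs⟩ := s.2
    have hcov : a ⋖ b := ⟨hsi.1, fun c h1 h2 => hsi.2 c h1 h2⟩
    rw [show (s : KGroup L) = Kcls a b from hs, hΦK a b hcov.lt.le,
      hsimplecls a b hcov, KProof.toZHom_single]
    congr 1
    exact Subtype.ext (by rw [KProof.scls_val]; exact hs.symm)
  -- linear independence
  have hli : LinearIndependent ℤ (fun s : SimpleClasses L => (s : KGroup L)) := by
    apply LinearIndependent.of_comp Φ.toIntLinearMap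
    have he : (⇑Φ.toIntLinearMap ∘ fun s : SimpleClasses L => (s : KGroup L))
        = fun s : SimpleClasses L => Finsupp.single s (1 : ℤ) := funext fun s => hΦs s
    rw [he]
    have hb := (Finsupp.basisSingleOne (R := ℤ) (ι := SimpleClasses L)).linearIndependent
    rwa [Finsupp.coe_basisSingleOne] at hb
  -- spanning
  have hsum : ∀ (a b : L) (h : a ≤ b),
      ((KProof.sfactors (sc a b h)).map Subtype.val).sum = Kcls a b := by
    intro a b h
    rw [KProof.sfactors_sum, hh, hl]
  have hmem : ∀ (a b : L) (h : a ≤ b),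
      Kcls a b ∈ Submodule.span ℤ (SimpleClasses L) := by
    intro a b h
    rw [← hsum a b h]
    refine multiset_sum_mem _ ?_
    intro y hy
    obtain ⟨t, _, rfl⟩ := Multiset.mem_map.mp hy
    exact Submodule.subset_span t.2
  have hspan : Submodule.span ℤ (SimpleClasses L) = (⊤ : Submodule ℤ (KGroup L)) := by
    rw [Submodule.eq_top_iff']
    intro x
    refine QuotientAddGroup.induction_on x ?_
    intro z
    induction z using FreeAbelianGroup.induction_on with
    | zero => rw [QuotientAddGroup.mk_zero]; exact zero_mem _
    | of p =>
      exact (KProof.Kcls_eq (KProof.igPair p).2) ▸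
        hmem (KProof.igPair p).1.1 (KProof.igPair p).1.2 (KProof.igPair p).2
    | neg p hp =>
      rw [QuotientAddGroup.mk_neg]
      exact neg_mem hp
    | add x y hx hy =>
      rw [QuotientAddGroup.mk_add]
      exact add_mem hx hy
  -- the positive cone
  have h0 : ∀ s : SimpleClasses L, ((0 : ℕ) : ℤ) • (s : KGroup L) = 0 := by
    intro s; simp
  have haddf : ∀ (s : SimpleClasses L) (n₁ n₂ : ℕ),
      ((n₁ + n₂ : ℕ) : ℤ) • (s : KGroup L)
        = ((n₁ : ℕ) : ℤ) • (s : KGroup L) + ((n₂ : ℕ) : ℤ) • (s : KGroup L) := by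
    intro s n₁ n₂; rw [Nat.cast_add, add_smul]
  have hTm : ∀ m : Multiset (SimpleClasses L),
      ((Multiset.toFinsupp m).sum fun s n => (n : ℤ) • (s : KGroup L))
        = (m.map Subtype.val).sum := by
    intro m
    induction m using Multiset.induction_on with
    | empty => simp
    | cons a m ih =>
      rw [show a ::ₘ m = {a} + m from (Multiset.singleton_add a m).symm,
        Multiset.toFinsupp_add, Finsupp.sum_add_index' h0 haddf, ih,
        Multiset.toFinsupp_singleton, Finsupp.sum_single_index (h0 a),
        Multiset.map_add, Multiset.sum_add, Multiset.map_singleton,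
        Multiset.sum_singleton, Nat.cast_one, one_smul]
  have hexist : ∀ x ∈ KPos L, ∃ c : SimpleClasses L →₀ ℕ,
      (c.sum fun s n => (n : ℤ) • (s : KGroup L)) = x := by
    intro x hx
    refine AddSubmonoid.closure_induction ?_ ?_ ?_ hx
    · rintro y ⟨a, b, hab, rfl⟩
      exact ⟨Multiset.toFinsupp (KProof.sfactors (sc a b hab.le)),
        (hTm _).trans (hsum a b hab.le)⟩
    · exact ⟨0, by simp⟩
    · rintro y z - - ⟨cy, hcy⟩ ⟨cz, hcz⟩
      exact ⟨cy + cz, by rw [Finsupp.sum_add_index' h0 haddf, hcy, hcz]⟩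
  have key : ∀ d : SimpleClasses L →₀ ℕ,
      Finsupp.linearCombination ℤ (fun s : SimpleClasses L => (s : KGroup L))
        (d.mapRange (fun n : ℕ => (n : ℤ)) Nat.cast_zero)
      = d.sum fun s n => (n : ℤ) • (s : KGroup L) := by
    intro d
    rw [Finsupp.linearCombination_apply, Finsupp.sum_mapRange_index (by simp)]
  have Tinj : ∀ c c' : SimpleClasses L →₀ ℕ,
      (c.sum fun s n => (n : ℤ) • (s : KGroup L))
        = (c'.sum fun s n => (n : ℤ) • (s : KGroup L)) → c = c' := by
    intro c c' hcc
    have hinj : Function.Injective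
        ⇑(Finsupp.linearCombination ℤ (fun s : SimpleClasses L => (s : KGroup L))) := hli
    have h2 : Finsupp.mapRange (fun n : ℕ => (n : ℤ)) Nat.cast_zero c
        = Finsupp.mapRange (fun n : ℕ => (n : ℤ)) Nat.cast_zero c' :=
      hinj (by rw [key, key]; exact hcc)
    ext s
    have h3 := congrArg (fun g : SimpleClasses L →₀ ℤ => g s) h2
    simp only [Finsupp.mapRange_apply] at h3
    exact_mod_cast h3
  exact ⟨hli, hspan, fun x hx => by
    obtain ⟨c, hc⟩ := hexist x hx
    exact ⟨c, hc, fun c' hc' => Tinj c' c (hc'.trans hc.symm)⟩⟩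
end

section
/- Let A be a finite-dimensional lozenge algebra. Then with respect to the inner products on A⁰, A¹ = A^{1,0} ⊕ A^{0,1}, and A², the adjoints of the differentials are given by ∂* = i[Λ,∂̄], ∂̄* = −i[Λ,∂], and d* = i[Λ, ∂̄ − ∂], where Λ is extended by 0 on A⁰ ⊕ A¹. In particular, ⟨∂a, b⟩ = ⟨a, iΛ(∂̄b)⟩ for all a ∈ A⁰ and b ∈ A^{1,0}, and ⟨∂̄a, b⟩ = ⟨a, −iΛ(∂b)⟩ for all a ∈ A⁰ and b ∈ A^{0,1}. -/
/-- A lozenge algebra: a ℤ-graded unital associative ℂ-algebra `A = A⁰ ⊕ A¹ ⊕ A²`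
concentrated in degrees 0,1,2 (with `A¹ = A^{1,0} ⊕ A^{0,1}`), equipped with a degree 1
derivation `d` with `d² = 0`, a central curvature `θ ∈ A²`, a ℂ-antilinear involution
`*`, a trace `τ : A² → ℂ` (extended by `0` to all of `A`), a Kähler element `ω ∈ A²`
with inverse Lefschetz operator `Λ` (extended by `0` on `A⁰ ⊕ A¹`), positive definite
Hermitian forms on each graded piece, and the Yang–Mills condition `d(Λθ) = 0`. -/
structure LozengeAlgebra (A : Type*) [Ring A] [Algebra ℂ A] where
  A0 : Submodule ℂ A
  A10 : Submodule ℂ A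
  A01 : Submodule ℂ A
  A2 : Submodule ℂ A
  p0 : A →ₗ[ℂ] A
  p10 : A →ₗ[ℂ] A
  p01 : A →ₗ[ℂ] A
  p2 : A →ₗ[ℂ] A
  d : A →ₗ[ℂ] A
  Lam : A →ₗ[ℂ] A
  st : A → A
  tau : A →ₗ[ℂ] ℂ
  theta : A
  omega : A
  -- the projections realize the direct sum decomposition A = A⁰ ⊕ A^{1,0} ⊕ A^{0,1} ⊕ A²
  p0_mem : ∀ x : A, p0 x ∈ A0
  p10_mem : ∀ x : A, p10 x ∈ A10
  p01_mem : ∀ x : A, p01 x ∈ A01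
  p2_mem : ∀ x : A, p2 x ∈ A2
  decomp : ∀ x : A, p0 x + p10 x + p01 x + p2 x = x
  proj_eq : ∀ x0 ∈ A0, ∀ x10 ∈ A10, ∀ x01 ∈ A01, ∀ x2 ∈ A2,
    p0 (x0 + x10 + x01 + x2) = x0 ∧ p10 (x0 + x10 + x01 + x2) = x10 ∧
    p01 (x0 + x10 + x01 + x2) = x01 ∧ p2 (x0 + x10 + x01 + x2) = x2
  -- multiplicative grading
  one_mem : (1 : A) ∈ A0
  mul00 : ∀ a ∈ A0, ∀ b ∈ A0, a * b ∈ A0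
  mul0_10 : ∀ a ∈ A0, ∀ b ∈ A10, a * b ∈ A10 ∧ b * a ∈ A10
  mul0_01 : ∀ a ∈ A0, ∀ b ∈ A01, a * b ∈ A01 ∧ b * a ∈ A01
  mul0_2 : ∀ a ∈ A0, ∀ b ∈ A2, a * b ∈ A2 ∧ b * a ∈ A2
  mul10_10 : ∀ a ∈ A10, ∀ b ∈ A10, a * b = 0
  mul10_01 : ∀ a ∈ A10, ∀ b ∈ A01, a * b ∈ A2 ∧ b * a ∈ A2
  mul01_01 : ∀ a ∈ A01, ∀ b ∈ A01, a * b ∈ A2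
  mul1_2 : ∀ a : A, (a ∈ A10 ∨ a ∈ A01) → ∀ b ∈ A2, a * b = 0 ∧ b * a = 0
  mul2_2 : ∀ a ∈ A2, ∀ b ∈ A2, a * b = 0
  -- the differential
  d0_mem : ∀ x ∈ A0, p10 (d x) + p01 (d x) = d x
  d10_mem : ∀ x ∈ A10, d x ∈ A2
  d01_mem : ∀ x ∈ A01, d x ∈ A2
  d2_zero : ∀ x ∈ A2, d x = 0
  d_sq : ∀ x : A, d (d x) = 0
  leibniz0 : ∀ a ∈ A0, ∀ b : A, d (a * b) = d a * b + a * d b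
  leibniz1 : ∀ a : A, (a ∈ A10 ∨ a ∈ A01) → ∀ b : A, d (a * b) = d a * b - a * d b
  leibniz2 : ∀ a ∈ A2, ∀ b : A, d (a * b) = d a * b + a * d b
  -- the curvature
  theta_mem : theta ∈ A2
  theta_central : ∀ a : A, theta * a = a * theta
  -- the ℂ-antilinear involution
  st_add : ∀ x y : A, st (x + y) = st x + st y
  st_smul : ∀ (c : ℂ) (x : A), st (c • x) = (starRingEnd ℂ c) • st x
  st_invol : ∀ x : A, st (st x) = x
  st_one : st 1 = 1
  st_mem0 : ∀ x ∈ A0, st x ∈ A0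
  st_mem10 : ∀ x ∈ A10, st x ∈ A01
  st_mem01 : ∀ x ∈ A01, st x ∈ A10
  st_mem2 : ∀ x ∈ A2, st x ∈ A2
  st_mul0 : ∀ a ∈ A0, ∀ b : A, st (a * b) = st b * st a ∧ st (b * a) = st a * st b
  st_mul1 : ∀ a b : A, (a ∈ A10 ∨ a ∈ A01) → (b ∈ A10 ∨ b ∈ A01) →
    st (a * b) = -(st b * st a)
  st_d : ∀ x : A, st (d x) = d (st x)
  st_theta : st theta = -theta
  -- the trace
  tau_zero0 : ∀ x ∈ A0, tau x = 0
  tau_zero10 : ∀ x ∈ A10, tau x = 0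
  tau_zero01 : ∀ x ∈ A01, tau x = 0
  tau_comm0 : ∀ a ∈ A0, ∀ b : A, tau (a * b) = tau (b * a)
  tau_anticomm1 : ∀ a b : A, (a ∈ A10 ∨ a ∈ A01) → (b ∈ A10 ∨ b ∈ A01) →
    tau (a * b) = -tau (b * a)
  tau_d : ∀ x : A, tau (d x) = 0
  tau_star : ∀ x ∈ A2, tau (st x) = starRingEnd ℂ (tau x)
  -- the Kähler element and the Lefschetz operators
  omega_mem : omega ∈ A2
  omega_st : st omega = omega
  omega_comm : ∀ a ∈ A0, omega * a = a * omega
  Lam_mem : ∀ x : A, Lam x ∈ A0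
  Lam_zero0 : ∀ x ∈ A0, Lam x = 0
  Lam_zero10 : ∀ x ∈ A10, Lam x = 0
  Lam_zero01 : ∀ x ∈ A01, Lam x = 0
  Lam_left_inv : ∀ a ∈ A0, Lam (omega * a) = a
  Lam_right_inv : ∀ b ∈ A2, omega * Lam b = b
  -- positive definiteness of the four Hermitian forms
  pos0 : ∀ a ∈ A0, a ≠ 0 →
    0 < (tau (omega * (st a * a))).re ∧ (tau (omega * (st a * a))).im = 0
  pos10 : ∀ a ∈ A10, a ≠ 0 →
    0 < (-Complex.I * tau (st a * a)).re ∧ (-Complex.I * tau (st a * a)).im = 0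
  pos01 : ∀ a ∈ A01, a ≠ 0 →
    0 < (Complex.I * tau (st a * a)).re ∧ (Complex.I * tau (st a * a)).im = 0
  pos2 : ∀ a ∈ A2, a ≠ 0 →
    0 < (tau (omega * (st (Lam a) * Lam a))).re ∧
      (tau (omega * (st (Lam a) * Lam a))).im = 0
  -- the Yang–Mills condition
  ym : d (Lam theta) = 0

namespace LozengeAlgebra

variable {A : Type*} [Ring A] [Algebra ℂ A] (Lz : LozengeAlgebra A)

/-- The operator `∂` (the `A^{1,0}`-component of `d` on `A⁰`, and `d` on `A^{0,1}`). -/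
def del (x : A) : A := Lz.p10 (Lz.d (Lz.p0 x)) + Lz.d (Lz.p01 x)

/-- The operator `∂̄` (the `A^{0,1}`-component of `d` on `A⁰`, and `d` on `A^{1,0}`). -/
def delbar (x : A) : A := Lz.p01 (Lz.d (Lz.p0 x)) + Lz.d (Lz.p10 x)

/-- The total inner product on `A = A⁰ ⊕ A^{1,0} ⊕ A^{0,1} ⊕ A²`, the orthogonal sum of
the Hermitian forms `τ(ω a* b)` on `A⁰`, `−iτ(a* b)` on `A^{1,0}`, `iτ(a* b)` on
`A^{0,1}`, and `τ(ω Λ(a)* Λ(b))` on `A²`. -/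
noncomputable def innerL (u v : A) : ℂ :=
  Lz.tau (Lz.omega * (Lz.st (Lz.p0 u) * Lz.p0 v))
    + (-Complex.I) * Lz.tau (Lz.st (Lz.p10 u) * Lz.p10 v)
    + Complex.I * Lz.tau (Lz.st (Lz.p01 u) * Lz.p01 v)
    + Lz.tau (Lz.omega * (Lz.st (Lz.Lam (Lz.p2 u)) * Lz.Lam (Lz.p2 v)))

end LozengeAlgebra


namespace LozengeAlgebra

variable {A : Type*} [Ring A] [Algebra ℂ A] (Lz : LozengeAlgebra A)

lemma projs {x x0 x10 x01 x2 : A} (h0 : x0 ∈ Lz.A0) (h10 : x10 ∈ Lz.A10)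
    (h01 : x01 ∈ Lz.A01) (h2 : x2 ∈ Lz.A2) (h : x = x0 + x10 + x01 + x2) :
    Lz.p0 x = x0 ∧ Lz.p10 x = x10 ∧ Lz.p01 x = x01 ∧ Lz.p2 x = x2 := by
  subst h; exact Lz.proj_eq x0 h0 x10 h10 x01 h01 x2 h2

lemma st_zero : Lz.st 0 = 0 := by
  have := Lz.st_smul 0 0
  simpa using this

lemma mul01_zero {x y : A} (hx : x ∈ Lz.A01) (hy : y ∈ Lz.A01) : x * y = 0 := by
  have h1 : Lz.st (x * y) = -(Lz.st y * Lz.st x) := Lz.st_mul1 x y (Or.inr hx) (Or.inr hy)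
  rw [Lz.mul10_10 _ (Lz.st_mem01 y hy) _ (Lz.st_mem01 x hx), neg_zero] at h1
  have h2 := congrArg Lz.st h1
  rwa [Lz.st_invol, Lz.st_zero] at h2

lemma Lam_p2 (v : A) : Lz.Lam v = Lz.Lam (Lz.p2 v) := by
  conv_lhs => rw [← Lz.decomp v]
  rw [map_add, map_add, map_add, Lz.Lam_zero0 _ (Lz.p0_mem v),
    Lz.Lam_zero10 _ (Lz.p10_mem v), Lz.Lam_zero01 _ (Lz.p01_mem v)]
  simp

lemma omega_mul_assoc {g : A} (hg : g ∈ Lz.A0) (f : A) :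
    Lz.omega * (g * f) = g * (Lz.omega * f) := by
  rw [← mul_assoc, Lz.omega_comm g hg, mul_assoc]

lemma tau_omega_Lam {g c : A} (hg : g ∈ Lz.A0) (hc : c ∈ Lz.A2) :
    Lz.tau (Lz.omega * (g * Lz.Lam c)) = Lz.tau (g * c) := by
  rw [Lz.omega_mul_assoc hg, Lz.Lam_right_inv c hc]

lemma tau_d_split {a b : A} (ha : a ∈ Lz.A0) (hb : b ∈ Lz.A10) :
    Lz.tau (Lz.p01 (Lz.d a) * b) = -Lz.tau (a * Lz.d b) := by
  have hsplit : Lz.d a * b = Lz.p01 (Lz.d a) * b := by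
    conv_lhs => rw [← Lz.d0_mem a ha]
    rw [add_mul, Lz.mul10_10 _ (Lz.p10_mem _) b hb, zero_add]
  have h := Lz.tau_d (a * b)
  rw [Lz.leibniz0 a ha b, map_add, hsplit] at h
  linear_combination h

lemma tau_d_split' {a b : A} (ha : a ∈ Lz.A0) (hb : b ∈ Lz.A01) :
    Lz.tau (Lz.p10 (Lz.d a) * b) = -Lz.tau (a * Lz.d b) := by
  have hsplit : Lz.d a * b = Lz.p10 (Lz.d a) * b := by
    conv_lhs => rw [← Lz.d0_mem a ha]
    rw [add_mul, Lz.mul01_zero (Lz.p01_mem _) hb, add_zero]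
  have h := Lz.tau_d (a * b)
  rw [Lz.leibniz0 a ha b, map_add, hsplit] at h
  linear_combination h

lemma st_d_projs {a : A} (ha : a ∈ Lz.A0) :
    Lz.p10 (Lz.d (Lz.st a)) = Lz.st (Lz.p01 (Lz.d a)) ∧
    Lz.p01 (Lz.d (Lz.st a)) = Lz.st (Lz.p10 (Lz.d a)) := by
  have hd : Lz.d (Lz.st a) = 0 + Lz.st (Lz.p01 (Lz.d a)) + Lz.st (Lz.p10 (Lz.d a)) + 0 := by
    rw [← Lz.st_d, zero_add, add_zero, ← Lz.st_add, add_comm, Lz.d0_mem a ha]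
  obtain ⟨-, h10, h01, -⟩ := Lz.projs (zero_mem _) (Lz.st_mem01 _ (Lz.p01_mem _))
    (Lz.st_mem10 _ (Lz.p10_mem _)) (zero_mem _) hd
  exact ⟨h10, h01⟩

lemma kai1_core {a b : A} (ha : a ∈ Lz.A0) (hb : b ∈ Lz.A10) :
    Lz.tau (Lz.st (Lz.p10 (Lz.d a)) * b) = -Lz.tau (Lz.st a * Lz.d b) := by
  rw [← (Lz.st_d_projs ha).2]
  exact Lz.tau_d_split (Lz.st_mem0 a ha) hb

lemma kai1'_core {a b : A} (ha : a ∈ Lz.A0) (hb : b ∈ Lz.A01) :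
    Lz.tau (Lz.st (Lz.p01 (Lz.d a)) * b) = -Lz.tau (Lz.st a * Lz.d b) := by
  rw [← (Lz.st_d_projs ha).1]
  exact Lz.tau_d_split' (Lz.st_mem0 a ha) hb

lemma kai2_core {x c : A} (hx : x ∈ Lz.A01) (hc : c ∈ Lz.A2) :
    Lz.tau (Lz.omega * (Lz.st (Lz.Lam (Lz.d x)) * Lz.Lam c)) =
      Lz.tau (Lz.st x * Lz.p01 (Lz.d (Lz.Lam c))) := by
  have he : Lz.Lam (Lz.d x) ∈ Lz.A0 := Lz.Lam_mem _
  have hse : Lz.st (Lz.Lam (Lz.d x)) ∈ Lz.A0 := Lz.st_mem0 _ he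
  have hstx : Lz.st x ∈ Lz.A10 := Lz.st_mem01 x hx
  have hf : Lz.Lam c ∈ Lz.A0 := Lz.Lam_mem c
  have h1 : Lz.st (Lz.Lam (Lz.d x)) * Lz.omega = Lz.d (Lz.st x) := by
    have hle : Lz.omega * Lz.Lam (Lz.d x) = Lz.d x :=
      Lz.Lam_right_inv _ (Lz.d01_mem x hx)
    have h2 := (Lz.st_mul0 _ he Lz.omega).2
    rw [hle, Lz.st_d, Lz.omega_st] at h2
    exact h2.symm
  have hL : Lz.omega * (Lz.st (Lz.Lam (Lz.d x)) * Lz.Lam c) = Lz.d (Lz.st x) * Lz.Lam c := by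
    rw [Lz.omega_mul_assoc hse, ← mul_assoc, h1]
  have hsx : Lz.st x * Lz.d (Lz.Lam c) = Lz.st x * Lz.p01 (Lz.d (Lz.Lam c)) := by
    conv_lhs => rw [← Lz.d0_mem _ hf]
    rw [mul_add, Lz.mul10_10 _ hstx _ (Lz.p10_mem _), zero_add]
  have hτ := Lz.tau_d (Lz.st x * Lz.Lam c)
  rw [Lz.leibniz1 (Lz.st x) (Or.inl hstx) (Lz.Lam c), map_sub, hsx] at hτ
  rw [hL]
  linear_combination hτ

lemma kai2'_core {x c : A} (hx : x ∈ Lz.A10) (hc : c ∈ Lz.A2) :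
    Lz.tau (Lz.omega * (Lz.st (Lz.Lam (Lz.d x)) * Lz.Lam c)) =
      Lz.tau (Lz.st x * Lz.p10 (Lz.d (Lz.Lam c))) := by
  have he : Lz.Lam (Lz.d x) ∈ Lz.A0 := Lz.Lam_mem _
  have hse : Lz.st (Lz.Lam (Lz.d x)) ∈ Lz.A0 := Lz.st_mem0 _ he
  have hstx : Lz.st x ∈ Lz.A01 := Lz.st_mem10 x hx
  have hf : Lz.Lam c ∈ Lz.A0 := Lz.Lam_mem c
  have h1 : Lz.st (Lz.Lam (Lz.d x)) * Lz.omega = Lz.d (Lz.st x) := by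
    have hle : Lz.omega * Lz.Lam (Lz.d x) = Lz.d x :=
      Lz.Lam_right_inv _ (Lz.d10_mem x hx)
    have h2 := (Lz.st_mul0 _ he Lz.omega).2
    rw [hle, Lz.st_d, Lz.omega_st] at h2
    exact h2.symm
  have hL : Lz.omega * (Lz.st (Lz.Lam (Lz.d x)) * Lz.Lam c) = Lz.d (Lz.st x) * Lz.Lam c := by
    rw [Lz.omega_mul_assoc hse, ← mul_assoc, h1]
  have hsx : Lz.st x * Lz.d (Lz.Lam c) = Lz.st x * Lz.p10 (Lz.d (Lz.Lam c)) := by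
    conv_lhs => rw [← Lz.d0_mem _ hf]
    rw [mul_add, Lz.mul01_zero hstx (Lz.p01_mem _), add_zero]
  have hτ := Lz.tau_d (Lz.st x * Lz.Lam c)
  rw [Lz.leibniz1 (Lz.st x) (Or.inr hstx) (Lz.Lam c), map_sub, hsx] at hτ
  rw [hL]
  linear_combination hτ

lemma innerL_add_left (s t v : A) :
    Lz.innerL (s + t) v = Lz.innerL s v + Lz.innerL t v := by
  simp only [innerL, map_add, Lz.st_add, add_mul, mul_add]
  ring

lemma innerL_add_right (u s t : A) :
    Lz.innerL u (s + t) = Lz.innerL u s + Lz.innerL u t := by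
  simp only [innerL, map_add, mul_add]
  ring

lemma innerL_smul_right (c : ℂ) (u t : A) :
    Lz.innerL u (c • t) = c * Lz.innerL u t := by
  simp only [innerL, map_smul, mul_smul_comm, smul_eq_mul]
  ring

lemma del_projs (u : A) :
    Lz.p0 (Lz.del u) = 0 ∧ Lz.p10 (Lz.del u) = Lz.p10 (Lz.d (Lz.p0 u)) ∧
    Lz.p01 (Lz.del u) = 0 ∧ Lz.p2 (Lz.del u) = Lz.d (Lz.p01 u) :=
  Lz.projs (zero_mem _) (Lz.p10_mem _) (zero_mem _) (Lz.d01_mem _ (Lz.p01_mem u))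
    (by unfold del; abel)

lemma delbar_projs (u : A) :
    Lz.p0 (Lz.delbar u) = 0 ∧ Lz.p10 (Lz.delbar u) = 0 ∧
    Lz.p01 (Lz.delbar u) = Lz.p01 (Lz.d (Lz.p0 u)) ∧ Lz.p2 (Lz.delbar u) = Lz.d (Lz.p10 u) :=
  Lz.projs (zero_mem _) (zero_mem _) (Lz.p01_mem _) (Lz.d10_mem _ (Lz.p10_mem u))
    (by unfold delbar; abel)

lemma d_eq_del_add_delbar (u : A) : Lz.d u = Lz.del u + Lz.delbar u := by
  conv_lhs => rw [← Lz.decomp u]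
  rw [map_add, map_add, map_add, Lz.d2_zero _ (Lz.p2_mem u), ← Lz.d0_mem _ (Lz.p0_mem u)]
  unfold del delbar
  abel

lemma Lam_projs (v : A) :
    Lz.p0 (Lz.Lam v) = Lz.Lam v ∧ Lz.p10 (Lz.Lam v) = 0 ∧
    Lz.p01 (Lz.Lam v) = 0 ∧ Lz.p2 (Lz.Lam v) = 0 :=
  Lz.projs (Lz.Lam_mem v) (zero_mem _) (zero_mem _) (zero_mem _) (by abel)

lemma adjR1 (v : A) : Lz.Lam (Lz.delbar v) - Lz.delbar (Lz.Lam v)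
    = Lz.Lam (Lz.d (Lz.p10 v)) + -(Lz.p01 (Lz.d (Lz.Lam (Lz.p2 v)))) := by
  have h1 : Lz.Lam (Lz.delbar v) = Lz.Lam (Lz.d (Lz.p10 v)) := by
    unfold delbar
    rw [map_add, Lz.Lam_zero01 _ (Lz.p01_mem _), zero_add]
  have h2 : Lz.delbar (Lz.Lam v) = Lz.p01 (Lz.d (Lz.Lam (Lz.p2 v))) := by
    unfold delbar
    obtain ⟨q0, q10, -, -⟩ := Lz.Lam_projs v
    rw [q0, q10, map_zero, add_zero, Lz.Lam_p2]
  rw [h1, h2, sub_eq_add_neg]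

lemma adjR2 (v : A) : Lz.Lam (Lz.del v) - Lz.del (Lz.Lam v)
    = Lz.Lam (Lz.d (Lz.p01 v)) + -(Lz.p10 (Lz.d (Lz.Lam (Lz.p2 v)))) := by
  have h1 : Lz.Lam (Lz.del v) = Lz.Lam (Lz.d (Lz.p01 v)) := by
    unfold del
    rw [map_add, Lz.Lam_zero10 _ (Lz.p10_mem _), zero_add]
  have h2 : Lz.del (Lz.Lam v) = Lz.p10 (Lz.d (Lz.Lam (Lz.p2 v))) := by
    unfold del
    obtain ⟨q0, -, q01, -⟩ := Lz.Lam_projs v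
    rw [q0, q01, map_zero, add_zero, Lz.Lam_p2]
  rw [h1, h2, sub_eq_add_neg]

end LozengeAlgebra

open LozengeAlgebra in
/-- in a finite-dimensional lozenge algebra the adjoints of the
differentials with respect to the inner products are given by the Kähler identities
`∂* = i[Λ,∂̄]`, `∂̄* = −i[Λ,∂]`, `d* = i[Λ, ∂̄ − ∂]` (with `Λ` extended by `0` on
`A⁰ ⊕ A¹`).  In particular `⟨∂a, b⟩ = ⟨a, iΛ(∂̄b)⟩` for `a ∈ A⁰`, `b ∈ A^{1,0}`, and
`⟨∂̄a, b⟩ = ⟨a, −iΛ(∂b)⟩` for `a ∈ A⁰`, `b ∈ A^{0,1}`. -/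
theorem lozenge_kaehler_adjoints
    (A : Type*) [Ring A] [Algebra ℂ A] [FiniteDimensional ℂ A]
    (Lz : LozengeAlgebra A) :
    (∀ u v : A, Lz.innerL (Lz.del u) v =
      Lz.innerL u (Complex.I • (Lz.Lam (Lz.delbar v) - Lz.delbar (Lz.Lam v)))) ∧
    (∀ u v : A, Lz.innerL (Lz.delbar u) v =
      Lz.innerL u ((-Complex.I) • (Lz.Lam (Lz.del v) - Lz.del (Lz.Lam v)))) ∧
    (∀ u v : A, Lz.innerL (Lz.d u) v =
      Lz.innerL u (Complex.I •
        ((Lz.Lam (Lz.delbar v) - Lz.delbar (Lz.Lam v))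
          - (Lz.Lam (Lz.del v) - Lz.del (Lz.Lam v))))) ∧
    (∀ a ∈ Lz.A0, ∀ b ∈ Lz.A10,
      (-Complex.I) * Lz.tau (Lz.st (Lz.p10 (Lz.d a)) * b) =
        Lz.tau (Lz.omega * (Lz.st a * (Complex.I • Lz.Lam (Lz.d b))))) ∧
    (∀ a ∈ Lz.A0, ∀ b ∈ Lz.A01,
      Complex.I * Lz.tau (Lz.st (Lz.p01 (Lz.d a)) * b) =
        Lz.tau (Lz.omega * (Lz.st a * ((-Complex.I) • Lz.Lam (Lz.d b))))) := by
  have hb1 : ∀ u v : A, Lz.innerL (Lz.del u) v =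
      Lz.innerL u (Complex.I • (Lz.Lam (Lz.delbar v) - Lz.delbar (Lz.Lam v))) := by
    intro u v
    obtain ⟨e0, e10, e01, e2⟩ := Lz.del_projs u
    rw [Lz.adjR1 v, Lz.innerL_smul_right]
    obtain ⟨f0, f10, f01, f2⟩ := Lz.projs (Lz.Lam_mem _) (zero_mem _)
      (neg_mem (Lz.p01_mem _)) (zero_mem _)
      (show Lz.Lam (Lz.d (Lz.p10 v)) + -(Lz.p01 (Lz.d (Lz.Lam (Lz.p2 v)))) = _ by abel)
    simp only [innerL, e0, e10, e01, e2, f0, f10, f01, f2, Lz.st_zero, zero_mul,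
      mul_zero, map_zero, map_neg, mul_neg, neg_zero, add_zero, zero_add]
    rw [Lz.kai1_core (Lz.p0_mem u) (Lz.p10_mem v), Lz.kai2_core (Lz.p01_mem u) (Lz.p2_mem v),
      Lz.tau_omega_Lam (Lz.st_mem0 _ (Lz.p0_mem u)) (Lz.d10_mem _ (Lz.p10_mem v))]
    linear_combination (Lz.tau (Lz.st (Lz.p01 u) * Lz.p01 (Lz.d (Lz.Lam (Lz.p2 v))))) *
      Complex.I_mul_I
  have hb2 : ∀ u v : A, Lz.innerL (Lz.delbar u) v =
      Lz.innerL u ((-Complex.I) • (Lz.Lam (Lz.del v) - Lz.del (Lz.Lam v))) := by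
    intro u v
    obtain ⟨e0, e10, e01, e2⟩ := Lz.delbar_projs u
    rw [Lz.adjR2 v, Lz.innerL_smul_right]
    obtain ⟨f0, f10, f01, f2⟩ := Lz.projs (Lz.Lam_mem _) (neg_mem (Lz.p10_mem _))
      (zero_mem _) (zero_mem _)
      (show Lz.Lam (Lz.d (Lz.p01 v)) + -(Lz.p10 (Lz.d (Lz.Lam (Lz.p2 v)))) = _ by abel)
    simp only [innerL, e0, e10, e01, e2, f0, f10, f01, f2, Lz.st_zero, zero_mul,
      mul_zero, map_zero, map_neg, mul_neg, neg_zero, add_zero, zero_add]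
    rw [Lz.kai1'_core (Lz.p0_mem u) (Lz.p01_mem v), Lz.kai2'_core (Lz.p10_mem u) (Lz.p2_mem v),
      Lz.tau_omega_Lam (Lz.st_mem0 _ (Lz.p0_mem u)) (Lz.d01_mem _ (Lz.p01_mem v))]
    linear_combination (Lz.tau (Lz.st (Lz.p10 u) * Lz.p10 (Lz.d (Lz.Lam (Lz.p2 v))))) *
      Complex.I_mul_I
  refine ⟨hb1, hb2, ?_, ?_, ?_⟩
  · intro u v
    rw [Lz.d_eq_del_add_delbar u, Lz.innerL_add_left]
    have hsplit : Complex.I • ((Lz.Lam (Lz.delbar v) - Lz.delbar (Lz.Lam v))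
          - (Lz.Lam (Lz.del v) - Lz.del (Lz.Lam v)))
        = Complex.I • (Lz.Lam (Lz.delbar v) - Lz.delbar (Lz.Lam v))
          + (-Complex.I) • (Lz.Lam (Lz.del v) - Lz.del (Lz.Lam v)) := by
      rw [smul_sub, sub_eq_add_neg, ← neg_smul]
    rw [hsplit, Lz.innerL_add_right, hb1 u v, hb2 u v]
  · intro a ha b hb
    rw [Lz.kai1_core ha hb]
    rw [show Lz.st a * (Complex.I • Lz.Lam (Lz.d b)) = Complex.I • (Lz.st a * Lz.Lam (Lz.d b))
        from mul_smul_comm _ _ _,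
      show Lz.omega * (Complex.I • (Lz.st a * Lz.Lam (Lz.d b)))
          = Complex.I • (Lz.omega * (Lz.st a * Lz.Lam (Lz.d b))) from mul_smul_comm _ _ _,
      map_smul, smul_eq_mul, Lz.tau_omega_Lam (Lz.st_mem0 a ha) (Lz.d10_mem b hb)]
    ring
  · intro a ha b hb
    rw [Lz.kai1'_core ha hb]
    rw [show Lz.st a * ((-Complex.I) • Lz.Lam (Lz.d b))
          = (-Complex.I) • (Lz.st a * Lz.Lam (Lz.d b)) from mul_smul_comm _ _ _,
      show Lz.omega * ((-Complex.I) • (Lz.st a * Lz.Lam (Lz.d b)))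
          = (-Complex.I) • (Lz.omega * (Lz.st a * Lz.Lam (Lz.d b))) from mul_smul_comm _ _ _,
      map_smul, smul_eq_mul, Lz.tau_omega_Lam (Lz.st_mem0 a ha) (Lz.d01_mem b hb)]
    ring
end
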